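/- Let P be a finite ranked poset with minimum element 0 and rank function r. Metrize P by d(a,b) = r(b) - r(a) if a ≤ b and ∞ otherwise. Then the weighting of P at 0 satisfies k^0 = ∑_{a ∈ P} ζ_P^{-1}(0,a) = π_P(-q), where π_P(q) = ∑_{a∈P} μ_P(0,a)(-q)^{r(a)} is the Poincaré polynomial of P and μ_P is the Möbius function of P. -/
import Mathlib


noncomputable section
open Classical

/-- Convolution product in the Novikov ring `A = ℚ[[q^ℝ]]`. -/
def conv (f g : ℝ → ℚ) : ℝ → ℚ := fun ℓ => ∑ᶠ x : ℝ, f x * g (ℓ - x)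

/-- The zeta matrix of a ranked poset metrized by `d(a,b) = r(b) - r(a)` if `a ≤ b`
and `∞` otherwise: `ζ(a,b) = q^{r(b)-r(a)}` if `a ≤ b` and `0` otherwise. -/
def rankedZeta (P : Type) [PartialOrder P] (r : P → ℕ) : P → P → ℝ → ℚ :=
  fun a b x => if a ≤ b ∧ x = ((r b : ℝ) - (r a : ℝ)) then 1 else 0

/-- The incidence matrix `ξ_P(x,y) = 1` if `x ≤ y`, `0` otherwise, over `ℚ`. -/
def xiMatrix (P : Type) [PartialOrder P] [Fintype P] : Matrix P P ℚ :=
  fun a b => if a ≤ b then 1 else 0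

/-- Convolving a point-mass `rankedZeta` on the left just shifts the argument. -/
lemma conv_rankedZeta_left (P : Type) [PartialOrder P] (r : P → ℕ) (a u : P)
    (f : ℝ → ℚ) (x : ℝ) :
    conv (rankedZeta P r a u) f x =
      if a ≤ u then f (x - ((r u : ℝ) - (r a : ℝ))) else 0 := by
  unfold conv rankedZeta
  by_cases h : a ≤ u
  · simp only [h, true_and, if_pos]
    rw [finsum_eq_single _ ((r u : ℝ) - (r a : ℝ)) (fun y hy => by simp [hy])]
    simp
  · simp [h]

/-- Let `P` be a finite ranked poset with minimum element `⊥` and rank function `r`,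
metrized by `d(a,b) = r(b) - r(a)` for `a ≤ b` and `∞` otherwise.  Then the weighting of
`P` at `⊥` satisfies `k^⊥ = ∑_a ζ_P⁻¹(⊥,a) = π_P(-q) = ∑_a μ_P(⊥,a) q^{r(a)}`, where
`μ_P = ξ_P⁻¹` is the Möbius function of `P`. -/
theorem stmt12 (P : Type) [PartialOrder P] [OrderBot P] [Fintype P]
    (r : P → ℕ) (hr0 : r ⊥ = 0)
    (hrmono : ∀ a b : P, a < b → r a < r b)
    (hrcov : ∀ a b : P, a ⋖ b → r b = r a + 1)
    (ζinv : P → P → ℝ → ℚ)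
    (hleft : ∀ (a b : P) (x : ℝ),
      (∑ u : P, conv (rankedZeta P r a u) (ζinv u b) x) = if a = b ∧ x = 0 then 1 else 0)
    (hright : ∀ (a b : P) (x : ℝ),
      (∑ u : P, conv (ζinv a u) (rankedZeta P r u b) x) = if a = b ∧ x = 0 then 1 else 0) :
    (fun x : ℝ => ∑ a : P, ζinv ⊥ a x) =
      fun x : ℝ => ∑ a : P, (if x = (r a : ℝ) then (xiMatrix P)⁻¹ ⊥ a else 0) := by
  -- simplified form of `hleft`
  have key : ∀ (a b : P) (x : ℝ),
      (∑ u : P, if a ≤ u then ζinv u b (x - ((r u : ℝ) - (r a : ℝ))) else 0)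
        = if a = b ∧ x = 0 then 1 else 0 := by
    intro a b x
    rw [← hleft a b x]
    exact Finset.sum_congr rfl fun u _ => (conv_rankedZeta_left P r a u _ x).symm
  -- vanishing away from the rank difference
  have vanish : ∀ n : ℕ, ∀ a b : P, ∀ x : ℝ,
      (Finset.univ.filter (fun u => a < u)).card ≤ n →
      x ≠ (r b : ℝ) - (r a : ℝ) → ζinv a b x = 0 := by
    intro n
    induction n with
    | zero =>
      intro a b x hcard hx
      have hempty : (Finset.univ.filter (fun u => a < u)) = ∅ :=
        Finset.card_eq_zero.mp (Nat.le_zero.mp hcard)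
      have h := key a b x
      have side : ∀ u ∈ Finset.univ, u ≠ a →
          (if a ≤ u then ζinv u b (x - ((r u : ℝ) - (r a : ℝ))) else 0) = 0 := by
        intro u _ hu
        have : ¬ a ≤ u := by
          intro hle
          have : u ∈ Finset.univ.filter (fun v => a < v) := by
            simp [lt_of_le_of_ne hle (Ne.symm hu)]
          rw [hempty] at this; exact absurd this (Finset.notMem_empty u)
        simp [this]
      rw [Finset.sum_eq_single_of_mem a (Finset.mem_univ a) side] at h
      simp only [le_refl, if_pos, sub_self, sub_zero] at h
      rw [h]
      by_cases hab : a = b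
      · subst hab
        have : x ≠ 0 := by simpa using hx
        simp [this]
      · simp [hab]
    | succ n ih =>
      intro a b x hcard hx
      have h := key a b x
      have side : ∀ u ∈ Finset.univ, u ≠ a →
          (if a ≤ u then ζinv u b (x - ((r u : ℝ) - (r a : ℝ))) else 0) = 0 := by
        intro u _ hu
        by_cases hle : a ≤ u
        · have hlt : a < u := lt_of_le_of_ne hle (Ne.symm hu)
          have hmem : u ∈ Finset.univ.filter (fun v => a < v) := by simp [hlt]
          have hsub : (Finset.univ.filter (fun v => u < v)) ⊆
              (Finset.univ.filter (fun v => a < v)).erase u := by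
            intro v hv
            simp only [Finset.mem_filter, Finset.mem_univ, true_and] at hv
            refine Finset.mem_erase.mpr ⟨(lt_irrefl u ∘ fun h => h ▸ hv), ?_⟩
            simp [lt_trans hlt hv]
          have hcard' : (Finset.univ.filter (fun v => u < v)).card ≤ n := by
            calc (Finset.univ.filter (fun v => u < v)).card
                ≤ ((Finset.univ.filter (fun v => a < v)).erase u).card :=
                  Finset.card_le_card hsub
              _ = (Finset.univ.filter (fun v => a < v)).card - 1 :=
                  Finset.card_erase_of_mem hmem
              _ ≤ n := by omega
          have harg : x - ((r u : ℝ) - (r a : ℝ)) ≠ (r b : ℝ) - (r u : ℝ) := by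
            intro hcontra; apply hx; linarith
          rw [if_pos hle, ih u b _ hcard' harg]
        · simp [hle]
      rw [Finset.sum_eq_single_of_mem a (Finset.mem_univ a) side] at h
      simp only [le_refl, if_pos, sub_self, sub_zero] at h
      rw [h]
      by_cases hab : a = b
      · subst hab
        have : x ≠ 0 := by simpa using hx
        simp [this]
      · simp [hab]
  -- the matrix `g` is a right inverse of `xiMatrix`
  set g : Matrix P P ℚ := fun a b => ζinv a b ((r b : ℝ) - (r a : ℝ)) with hgdef
  have hg : xiMatrix P * g = 1 := by
    ext a b
    rw [Matrix.mul_apply]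
    have h := key a b ((r b : ℝ) - (r a : ℝ))
    have hL : (∑ u : P, xiMatrix P a u * g u b)
        = ∑ u : P, if a ≤ u then
            ζinv u b (((r b : ℝ) - (r a : ℝ)) - ((r u : ℝ) - (r a : ℝ))) else 0 := by
      refine Finset.sum_congr rfl fun u _ => ?_
      by_cases hle : a ≤ u
      · simp only [xiMatrix, hgdef, hle, if_pos, one_mul]
        congr 1
        ring
      · simp [xiMatrix, hle]
    rw [hL, h, Matrix.one_apply]
    by_cases hab : a = b
    · subst hab; simp
    · simp [hab]
  have hinv : (xiMatrix P)⁻¹ = g := Matrix.inv_eq_right_inv hg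
  -- conclude
  funext x
  refine Finset.sum_congr rfl fun a _ => ?_
  by_cases hx : x = (r a : ℝ)
  · rw [if_pos hx, hinv, hgdef]
    show ζinv ⊥ a x = ζinv ⊥ a ((r a : ℝ) - (r (⊥ : P) : ℝ))
    have : ((r a : ℝ) - (r (⊥ : P) : ℝ)) = x := by rw [hr0, hx]; simp
    rw [this]
  · rw [if_neg hx]
    refine vanish (Finset.univ.filter (fun u => (⊥ : P) < u)).card ⊥ a x le_rfl ?_
    rw [hr0]
    simpa using hx
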